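/- arXiv:2311.10186 — 2 statements merged into one kernel-verified Lean document; each statement's English description precedes it below -/
import Mathlib

section
/- Let $\psi \colon [a,b] \to (0,+\infty]$ be a lower semicontinuous function with $\psi(a) < +\infty$ and $\psi(b) < +\infty$. Then for every $\eta > 0$ there exists a finite partition $a = r^0 < r^1 < \dots < r^{N} = b$ of $[a,b]$ such that for every $j \in \{1, \dots, N\}$ and every $s \in (r^{j-1}, r^j)$ one has $\psi(s) \geq \tfrac{1}{2}\big(\psi(r^{j-1}) + \psi(r^j)\big) - \eta$. -/
open scoped ENNReal

namespace Stmt0Aux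

open Set

/-- A "good chain" from `p` to `q`: a partition such that on each open subinterval,
`ψ` is at least each endpoint value minus `η`. -/
def GC (ψ : ℝ → ℝ≥0∞) (η : ℝ≥0∞) (p q : ℝ) : Prop :=
  ∃ (N : ℕ) (r : ℕ → ℝ), 0 < N ∧ r 0 = p ∧ r N = q ∧ (∀ j < N, r j < r (j + 1)) ∧
    ∀ j < N, ∀ s ∈ Set.Ioo (r j) (r (j + 1)), ψ (r j) - η ≤ ψ s ∧ ψ (r (j + 1)) - η ≤ ψ s

lemma GC.single {ψ : ℝ → ℝ≥0∞} {η : ℝ≥0∞} {p q : ℝ} (hpq : p < q)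
    (h : ∀ s ∈ Set.Ioo p q, ψ p - η ≤ ψ s ∧ ψ q - η ≤ ψ s) : GC ψ η p q := by
  refine ⟨1, fun j => if j = 0 then p else q, one_pos, by simp, by simp, ?_, ?_⟩
  · intro j hj
    interval_cases j
    simpa using hpq
  · intro j hj
    interval_cases j
    simpa using h

lemma GC.append {ψ : ℝ → ℝ≥0∞} {η : ℝ≥0∞} {p q t : ℝ} (h1 : GC ψ η p q) (h2 : GC ψ η q t) :
    GC ψ η p t := by
  obtain ⟨N1, r1, hN1, hr10, hr1N, hmono1, hb1⟩ := h1
  obtain ⟨N2, r2, hN2, hr20, hr2N, hmono2, hb2⟩ := h2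
  set r : ℕ → ℝ := fun j => if j < N1 then r1 j else r2 (j - N1) with hr
  have hvall : ∀ j ≤ N1, r j = r1 j := by
    intro j hj
    rcases lt_or_eq_of_le hj with h | h
    · simp [hr, h]
    · subst h
      simp [hr, hr20, hr1N]
  have hvalr : ∀ j, N1 ≤ j → r j = r2 (j - N1) := by
    intro j hj
    rcases lt_or_eq_of_le hj with h | h
    · simp [hr, not_lt.mpr hj]
    · subst h
      simp [hr, hr20, hr1N]
  refine ⟨N1 + N2, r, by omega, ?_, ?_, ?_, ?_⟩
  · rw [hvall 0 (by omega)]; exact hr10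
  · rw [hvalr (N1 + N2) (by omega)]
    rw [show N1 + N2 - N1 = N2 by omega]
    exact hr2N
  · intro j hj
    by_cases h : j + 1 ≤ N1
    · rw [hvall j (by omega), hvall (j + 1) h]
      exact hmono1 j (by omega)
    · rw [hvalr (j + 1) (by omega)]
      by_cases h' : j ≤ N1
      · have hjN1 : j = N1 := by omega
        rw [hvall j h', hjN1, hr1N, show N1 + 1 - N1 = 0 + 1 by omega, ← hr20]
        exact hmono2 0 (by omega)
      · rw [hvalr j (by omega), show j + 1 - N1 = (j - N1) + 1 by omega]
        exact hmono2 (j - N1) (by omega)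
  · intro j hj
    by_cases h : j + 1 ≤ N1
    · rw [hvall j (by omega), hvall (j + 1) h]
      exact hb1 j (by omega)
    · rw [hvalr (j + 1) (by omega)]
      by_cases h' : j ≤ N1
      · have hjN1 : j = N1 := by omega
        rw [hvall j h', hjN1, hr1N, show N1 + 1 - N1 = 0 + 1 by omega, ← hr20]
        exact hb2 0 (by omega)
      · rw [hvalr j (by omega), show j + 1 - N1 = (j - N1) + 1 by omega]
        exact hb2 (j - N1) (by omega)

lemma lsc_ball {a b : ℝ} {ψ : ℝ → ℝ≥0∞} (hlsc : LowerSemicontinuousOn ψ (Set.Icc a b))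
    {x : ℝ} (hx : x ∈ Set.Icc a b) {y : ℝ≥0∞} (hy : y < ψ x) :
    ∃ ε > 0, ∀ s ∈ Set.Icc a b, |s - x| < ε → y < ψ s := by
  have h := hlsc x hx y hy
  rw [Filter.eventually_iff, Metric.mem_nhdsWithin_iff] at h
  obtain ⟨ε, hε, hsub⟩ := h
  exact ⟨ε, hε, fun s hs hd => hsub ⟨Metric.mem_ball.mpr (by rwa [Real.dist_eq]), hs⟩⟩

/-- Build a good chain from `p` to `q`, working from the right, assuming the one-sided
bound `ψ(s) ≥ ψ(p) - η` is already known on `(p,q)`. -/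
lemma right_chain {a b : ℝ} {ψ : ℝ → ℝ≥0∞}
    (hpos : ∀ s ∈ Set.Icc a b, 0 < ψ s)
    (hlsc : LowerSemicontinuousOn ψ (Set.Icc a b))
    {η : ℝ≥0∞} (hη0 : η ≠ 0) (hηt : η ≠ ⊤) :
    ∀ n : ℕ, ∀ p q : ℝ, a ≤ p → p < q → q ≤ b → ψ q ≠ ⊤ → ψ q ≤ n * η →
      (∀ s ∈ Set.Ioo p q, ψ p - η ≤ ψ s) → GC ψ η p q := by
  intro n
  induction n with
  | zero =>
    intro p q hap hpq hqb hqt hqn _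
    have hq0 : ψ q = 0 := le_antisymm (by simpa using hqn) (zero_le)
    exact absurd hq0 (hpos q ⟨hap.trans hpq.le, hqb⟩).ne'
  | succ n ih =>
    intro p q hap hpq hqb hqt hqn hleft
    have hqI : q ∈ Set.Icc a b := ⟨hap.trans hpq.le, hqb⟩
    set S : Set ℝ := {t | t ∈ Set.Ico p q ∧ ∀ s ∈ Set.Ioo t q, ψ q - η ≤ ψ s} with hS
    have hSne : S.Nonempty := by
      by_cases hsm : ψ q ≤ η
      · exact ⟨p, ⟨le_refl p, hpq⟩, fun s _ => by simp [tsub_eq_zero_of_le hsm]⟩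
      · have hy : ψ q - η < ψ q :=
          ENNReal.sub_lt_self hqt (hpos q hqI).ne' hη0
        obtain ⟨ε, hε, hball⟩ := lsc_ball hlsc hqI hy
        refine ⟨max p (q - ε), ⟨le_max_left _ _, max_lt hpq (by linarith)⟩, ?_⟩
        intro s hs
        have hs1 : p < s := lt_of_le_of_lt (le_max_left _ _) hs.1
        have hs2 : q - ε < s := lt_of_le_of_lt (le_max_right _ _) hs.1
        have hs3 : s < q := hs.2
        exact (hball s ⟨hap.trans hs1.le, hs.2.le.trans hqb⟩ (by rw [abs_sub_lt_iff]; constructor <;> linarith)).le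
    have hSbdd : BddBelow S := ⟨p, fun t ht => ht.1.1⟩
    set d := sInf S with hd
    have hpd : p ≤ d := le_csInf hSne fun t ht => ht.1.1
    have hdq : d < q := lt_of_le_of_lt (csInf_le hSbdd hSne.choose_spec) hSne.choose_spec.1.2
    have hdgood : ∀ s ∈ Set.Ioo d q, ψ q - η ≤ ψ s := by
      intro s hs
      obtain ⟨t, ht, hts⟩ := exists_lt_of_csInf_lt hSne hs.1
      exact ht.2 s ⟨hts, hs.2⟩
    rcases eq_or_lt_of_le hpd with hdp | hdp
    · exact GC.single hpq fun s hs => ⟨hleft s hs, hdgood s ⟨hdp ▸ hs.1, hs.2⟩⟩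
    · -- p < d : show ψ d ≤ ψ q - η, recurse on (p, d), append (d, q)
      have hdI : d ∈ Set.Icc a b := ⟨hap.trans hdp.le, hdq.le.trans hqb⟩
      have hψd : ψ d ≤ ψ q - η := by
        by_contra hcon
        push_neg at hcon
        obtain ⟨ε, hε, hball⟩ := lsc_ball hlsc hdI hcon
        have htS : max p (d - ε) ∈ S := by
          refine ⟨⟨le_max_left _ _, max_lt (hdp.trans hdq) (by linarith)⟩, ?_⟩
          intro s hs
          rcases lt_or_ge d s with h | h
          · exact hdgood s ⟨h, hs.2⟩
          · have hs1 : p < s := lt_of_le_of_lt (le_max_left _ _) hs.1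
            have hs2 : d - ε < s := lt_of_le_of_lt (le_max_right _ _) hs.1
            exact (hball s ⟨hap.trans hs1.le, hs.2.le.trans hqb⟩
              (by rw [abs_sub_lt_iff]; constructor <;> linarith)).le
        have := csInf_le hSbdd htS
        have hlt : max p (d - ε) < d := max_lt hdp (by linarith)
        rw [← hd] at this
        linarith
      have hψdt : ψ d ≠ ⊤ := fun h => hqt (top_le_iff.mp (h ▸ hψd.trans tsub_le_self))
      have hψdn : ψ d ≤ n * η := by
        have h1 : ψ q - η ≤ (n + 1 : ℕ) * η - η := tsub_le_tsub_right hqn η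
        have h2 : ((n + 1 : ℕ) : ℝ≥0∞) * η - η = n * η := by
          push_cast
          rw [add_mul, one_mul, ENNReal.add_sub_cancel_right hηt]
        exact hψd.trans (h1.trans_eq h2)
      have hchain : GC ψ η p d :=
        ih p d hap hdp (hdq.le.trans hqb) hψdt hψdn
          (fun s hs => hleft s ⟨hs.1, hs.2.trans hdq⟩)
      refine hchain.append (GC.single hdq fun s hs => ⟨?_, hdgood s hs⟩)
      exact tsub_le_self.trans (hψd.trans (hdgood s hs))

/-- Build a good chain from `p` to `b`, working from the left. -/
lemma left_chain {a b : ℝ} {ψ : ℝ → ℝ≥0∞}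
    (hpos : ∀ s ∈ Set.Icc a b, 0 < ψ s)
    (hlsc : LowerSemicontinuousOn ψ (Set.Icc a b))
    (hψb : ψ b ≠ ⊤)
    {η : ℝ≥0∞} (hη0 : η ≠ 0) (hηt : η ≠ ⊤) :
    ∀ n : ℕ, ∀ p : ℝ, a ≤ p → p < b → ψ p ≠ ⊤ → ψ p ≤ n * η → GC ψ η p b := by
  intro n
  induction n with
  | zero =>
    intro p hap hpb hpt hpn
    have hp0 : ψ p = 0 := le_antisymm (by simpa using hpn) (zero_le)
    exact absurd hp0 (hpos p ⟨hap, hpb.le⟩).ne'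
  | succ n ih =>
    intro p hap hpb hpt hpn
    have hpI : p ∈ Set.Icc a b := ⟨hap, hpb.le⟩
    set S : Set ℝ := {t | t ∈ Set.Ioc p b ∧ ∀ s ∈ Set.Ioo p t, ψ p - η ≤ ψ s} with hS
    have hSne : S.Nonempty := by
      by_cases hsm : ψ p ≤ η
      · exact ⟨b, ⟨hpb, le_refl b⟩, fun s _ => by simp [tsub_eq_zero_of_le hsm]⟩
      · have hy : ψ p - η < ψ p :=
          ENNReal.sub_lt_self hpt (hpos p hpI).ne' hη0
        obtain ⟨ε, hε, hball⟩ := lsc_ball hlsc hpI hy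
        refine ⟨min b (p + ε), ⟨lt_min hpb (by linarith), min_le_left _ _⟩, ?_⟩
        intro s hs
        have hs1 : s < b := lt_of_lt_of_le hs.2 (min_le_left _ _)
        have hs2 : s < p + ε := lt_of_lt_of_le hs.2 (min_le_right _ _)
        have hs0 : p < s := hs.1
        exact (hball s ⟨hap.trans hs.1.le, hs1.le⟩ (by rw [abs_sub_lt_iff]; constructor <;> linarith)).le
    have hSbdd : BddAbove S := ⟨b, fun t ht => ht.1.2⟩
    set c := sSup S with hc
    have hcb : c ≤ b := csSup_le hSne fun t ht => ht.1.2
    have hpc : p < c := lt_of_lt_of_le hSne.choose_spec.1.1 (le_csSup hSbdd hSne.choose_spec)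
    have hcgood : ∀ s ∈ Set.Ioo p c, ψ p - η ≤ ψ s := by
      intro s hs
      obtain ⟨t, ht, hts⟩ := exists_lt_of_lt_csSup hSne hs.2
      exact ht.2 s ⟨hs.1, hts⟩
    rcases eq_or_lt_of_le hcb with hcb' | hcb'
    · -- c = b : finish with the right chain on (p, b)
      have harch : ∃ m : ℕ, ψ b ≤ m * η := by
        obtain ⟨m, hm⟩ := ENNReal.exists_nat_gt (r := ψ b / η) (ENNReal.div_lt_top hψb hη0).ne
        exact ⟨m, (ENNReal.div_le_iff_le_mul (Or.inl hη0) (Or.inl hηt)).mp hm.le |>.trans_eq rfl⟩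
      obtain ⟨m, hm⟩ := harch
      exact right_chain hpos hlsc hη0 hηt m p b hap hpb le_rfl hψb hm
        (fun s hs => hcgood s ⟨hs.1, hcb' ▸ hs.2⟩)
    · -- c < b : show ψ c ≤ ψ p - η, prepend (p, c), recurse from c
      have hcI : c ∈ Set.Icc a b := ⟨hap.trans hpc.le, hcb⟩
      have hψc : ψ c ≤ ψ p - η := by
        by_contra hcon
        push_neg at hcon
        obtain ⟨ε, hε, hball⟩ := lsc_ball hlsc hcI hcon
        have htS : min b (c + ε) ∈ S := by
          refine ⟨⟨lt_min (hpc.trans hcb') (by linarith), min_le_left _ _⟩, ?_⟩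
          intro s hs
          rcases lt_or_ge s c with h | h
          · exact hcgood s ⟨hs.1, h⟩
          · have hs1 : s < b := lt_of_lt_of_le hs.2 (min_le_left _ _)
            have hs2 : s < c + ε := lt_of_lt_of_le hs.2 (min_le_right _ _)
            exact (hball s ⟨hap.trans hs.1.le, hs1.le⟩
              (by rw [abs_sub_lt_iff]; constructor <;> linarith)).le
        have := le_csSup hSbdd htS
        have hlt : c < min b (c + ε) := lt_min hcb' (by linarith)
        rw [← hc] at this
        linarith
      have hψct : ψ c ≠ ⊤ := fun h => hpt (top_le_iff.mp (h ▸ hψc.trans tsub_le_self))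
      have hψcn : ψ c ≤ n * η := by
        have h1 : ψ p - η ≤ (n + 1 : ℕ) * η - η := tsub_le_tsub_right hpn η
        have h2 : ((n + 1 : ℕ) : ℝ≥0∞) * η - η = n * η := by
          push_cast
          rw [add_mul, one_mul, ENNReal.add_sub_cancel_right hηt]
        exact hψc.trans (h1.trans_eq h2)
      have hchain : GC ψ η c b := ih c (hap.trans hpc.le) hcb' hψct hψcn
      refine (GC.single hpc fun s hs => ⟨hcgood s hs, ?_⟩).append hchain
      exact tsub_le_self.trans (hψc.trans (hcgood s hs))

end Stmt0Aux

/-- If `ψ : [a,b] → (0,+∞]` is lower semicontinuous with `ψ(a), ψ(b)` finite, then for every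
`η > 0` there is a finite partition `a = r⁰ < r¹ < ⋯ < r^N = b` such that on every open
subinterval `(r^{j-1}, r^j)` one has `ψ(s) ≥ (ψ(r^{j-1}) + ψ(r^j))/2 - η`. -/
theorem stmt0 (a b : ℝ) (hab : a < b) (ψ : ℝ → ℝ≥0∞)
    (hpos : ∀ s ∈ Set.Icc a b, 0 < ψ s)
    (hlsc : LowerSemicontinuousOn ψ (Set.Icc a b))
    (hψa : ψ a ≠ ⊤) (hψb : ψ b ≠ ⊤)
    (η : ℝ≥0∞) (hη : 0 < η) :
    ∃ (N : ℕ) (r : ℕ → ℝ), 0 < N ∧ r 0 = a ∧ r N = b ∧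
      (∀ j < N, r j < r (j + 1)) ∧
      ∀ j < N, ∀ s ∈ Set.Ioo (r j) (r (j + 1)),
        (ψ (r j) + ψ (r (j + 1))) / 2 - η ≤ ψ s := by
  set η' := min η 1 with hη'
  have hη'0 : η' ≠ 0 := (lt_min hη zero_lt_one).ne'
  have hη't : η' ≠ ⊤ := ne_top_of_le_ne_top ENNReal.one_ne_top (min_le_right _ _)
  have hη'le : η' ≤ η := min_le_left _ _
  have harch : ∃ n : ℕ, ψ a ≤ n * η' := by
    obtain ⟨n, hn⟩ := ENNReal.exists_nat_gt (r := ψ a / η') (ENNReal.div_lt_top hψa hη'0).ne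
    exact ⟨n, (ENNReal.div_le_iff_le_mul (Or.inl hη'0) (Or.inl hη't)).mp hn.le⟩
  obtain ⟨n, hn⟩ := harch
  obtain ⟨N, r, hN, hr0, hrN, hmono, hbnd⟩ :=
    Stmt0Aux.left_chain hpos hlsc hψb hη'0 hη't n a le_rfl hab hψa hn
  refine ⟨N, r, hN, hr0, hrN, hmono, ?_⟩
  intro j hj s hs
  obtain ⟨hl, hr⟩ := hbnd j hj s hs
  rw [tsub_le_iff_right]
  have hmax : max (ψ (r j)) (ψ (r (j + 1))) ≤ ψ s + η := by
    refine max_le ?_ ?_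
    · exact (tsub_le_iff_right.mp hl).trans (add_le_add le_rfl hη'le)
    · exact (tsub_le_iff_right.mp hr).trans (add_le_add le_rfl hη'le)
  refine le_trans ?_ hmax
  refine ENNReal.div_le_of_le_mul ?_
  rw [mul_two]
  exact add_le_add (le_max_left _ _) (le_max_right _ _)
end

section
/- Let $(\mathsf{X},\mathsf{H},\mathsf{X}^*)$ be a Hilbert triple (i.e.\ $\mathsf{X}$ is a Hilbert space densely and continuously embedded in the Hilbert space $\mathsf{H}$), and let $\mathsf{R} \colon \mathsf{X} \to [0,+\infty]$ be convex, positively 1-homogeneous with $\mathsf{R}(0)=0$. Define the extended $\mathsf{H}$-norm $\mathfrak{f}_{\mathsf{H}}(\xi) = \|\xi\|_{\mathsf{H}}$ if $\xi \in \mathsf{H}$ and $+\infty$ otherwise, for $\xi \in \mathsf{X}^*$. Then for every $\xi \in \mathsf{X}^*$, $\inf_{w \in \partial\mathsf{R}(0)} \mathfrak{f}_{\mathsf{H}}(\xi - w) = \sup\{ \langle \xi, \eta \rangle_{\mathsf{X}} - \mathsf{R}(\eta) \, : \, \eta \in \mathsf{X}, \ \|\eta\|_{\mathsf{H}} \leq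 1 \}$. -/
open scoped ENNReal NNReal


lemma ennreal_ereal_coe_toReal {x : ℝ≥0∞} (hx : x ≠ ⊤) :
    (x : EReal) = ((x.toReal : ℝ) : EReal) := by
  lift x to ℝ≥0 using hx
  simp [ENNReal.coe_toReal]
  rfl

lemma hb_aux {X H : Type*}
    [NormedAddCommGroup X] [InnerProductSpace ℝ X]
    [NormedAddCommGroup H] [InnerProductSpace ℝ H] [CompleteSpace H]
    (i : X →L[ℝ] H)
    (R : X → ℝ≥0∞) (hR0 : R 0 = 0)
    (hconv : ∀ v w : X, ∀ t : ℝ, 0 ≤ t → t ≤ 1 →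
      R (t • v + (1 - t) • w) ≤ ENNReal.ofReal t * R v + ENNReal.ofReal (1 - t) * R w)
    (hhom : ∀ c : ℝ, 0 < c → ∀ v : X, R (c • v) = ENNReal.ofReal c * R v)
    (ξ : X →L[ℝ] ℝ) (M : ℝ) (hM : 0 ≤ M)
    (hkey : ∀ η : X, R η ≠ ⊤ → ξ η - (R η).toReal ≤ M * ‖i η‖) :
    ∃ h : H, ‖h‖ ≤ M ∧ ∀ η : X, R η ≠ ⊤ → ξ η - (inner ℝ h (i η) : ℝ) ≤ (R η).toReal := by
  classical
  set Sset : H → Set ℝ := fun x =>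
    {y | ∃ η : X, R η ≠ ⊤ ∧ y = (R η).toReal - ξ η + M * ‖x - i η‖} with hSset
  have mem0 : ∀ x : H, M * ‖x‖ ∈ Sset x := by
    intro x
    refine ⟨0, by simp [hR0], by simp [hR0]⟩
  have hne : ∀ x : H, (Sset x).Nonempty := fun x => ⟨_, mem0 x⟩
  have hbdd : ∀ x : H, ∀ y ∈ Sset x, -(M * ‖x‖) ≤ y := by
    rintro x y ⟨η, hη, rfl⟩
    have h1 := hkey η hη
    have h2 : ‖i η‖ ≤ ‖x - i η‖ + ‖x‖ := by
      have h4 := norm_sub_norm_le (i η) x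
      have h3 : ‖i η - x‖ = ‖x - i η‖ := norm_sub_rev _ _
      linarith
    nlinarith [mul_le_mul_of_nonneg_left h2 hM]
  have hbdd' : ∀ x : H, BddBelow (Sset x) := fun x => ⟨_, hbdd x⟩
  set p : H → ℝ := fun x => sInf (Sset x) with hp
  have hple : ∀ x : H, p x ≤ M * ‖x‖ := fun x => csInf_le (hbdd' x) (mem0 x)
  have hplow : ∀ x : H, -(M * ‖x‖) ≤ p x := fun x => le_csInf (hne x) (hbdd x)
  -- one-sided homogeneity
  have pble : ∀ c : ℝ, 0 < c → ∀ x : H, p (c • x) ≤ c * p x := by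
    intro c hc x
    have h1 : ∀ y ∈ Sset x, p (c • x) ≤ c * y := by
      rintro y ⟨η, hη, rfl⟩
      have hmem : c * ((R η).toReal - ξ η + M * ‖x - i η‖) ∈ Sset (c • x) := by
        refine ⟨c • η, ?_, ?_⟩
        · rw [hhom c hc]
          exact ENNReal.mul_ne_top ENNReal.ofReal_ne_top hη
        · have hR : (R (c • η)).toReal = c * (R η).toReal := by
            rw [hhom c hc, ENNReal.toReal_mul, ENNReal.toReal_ofReal hc.le]
          have hnorm : ‖c • x - i (c • η)‖ = c * ‖x - i η‖ := by
            rw [map_smul, ← smul_sub, norm_smul, Real.norm_eq_abs, abs_of_pos hc]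
          have hx : ξ (c • η) = c * ξ η := by rw [map_smul, smul_eq_mul]
          rw [hR, hx, hnorm]
          ring
      exact csInf_le (hbdd' _) hmem
    have h2 : p (c • x) / c ≤ p x := by
      refine le_csInf (hne x) fun y hy => ?_
      rw [div_le_iff₀ hc]
      have := h1 y hy
      linarith [mul_comm c y]
    calc p (c • x) = (p (c • x) / c) * c := by field_simp
    _ ≤ p x * c := mul_le_mul_of_nonneg_right h2 hc.le
    _ = c * p x := mul_comm _ _
  have phom : ∀ c : ℝ, 0 < c → ∀ x : H, p (c • x) = c * p x := by
    intro c hc x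
    refine le_antisymm (pble c hc x) ?_
    have := pble c⁻¹ (by positivity) (c • x)
    rw [smul_smul, inv_mul_cancel₀ hc.ne', one_smul] at this
    have h2 := mul_le_mul_of_nonneg_left this hc.le
    rw [← mul_assoc, mul_inv_cancel₀ hc.ne', one_mul] at h2
    exact h2
  -- subadditivity
  have hRadd : ∀ η₁ η₂ : X, R (η₁ + η₂) ≤ R η₁ + R η₂ := by
    intro η₁ η₂
    have h1 := hconv η₁ η₂ (1/2) (by norm_num) (by norm_num)
    have h2 : η₁ + η₂ = (2:ℝ) • ((1/2 : ℝ) • η₁ + (1 - 1/2 : ℝ) • η₂) := by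
      rw [smul_add, smul_smul, smul_smul]
      norm_num
    calc R (η₁ + η₂) = ENNReal.ofReal 2 * R ((1/2 : ℝ) • η₁ + (1 - 1/2 : ℝ) • η₂) := by
          rw [h2, hhom 2 (by norm_num)]
      _ ≤ ENNReal.ofReal 2 * (ENNReal.ofReal (1/2) * R η₁ + ENNReal.ofReal (1 - 1/2) * R η₂) :=
          mul_le_mul_right h1 _
      _ = R η₁ + R η₂ := by
          rw [mul_add, ← mul_assoc, ← mul_assoc, ← ENNReal.ofReal_mul (by norm_num : (0:ℝ) ≤ 2),
            ← ENNReal.ofReal_mul (by norm_num : (0:ℝ) ≤ 2)]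
          norm_num
  have padd : ∀ x y : H, p (x + y) ≤ p x + p y := by
    intro x y
    have h1 : ∀ a ∈ Sset x, ∀ b ∈ Sset y, p (x + y) ≤ a + b := by
      rintro a ⟨η₁, hη₁, rfl⟩ b ⟨η₂, hη₂, rfl⟩
      have hfin : R (η₁ + η₂) ≠ ⊤ := by
        intro hT
        have := hRadd η₁ η₂
        rw [hT] at this
        exact (ENNReal.add_ne_top.2 ⟨hη₁, hη₂⟩) (top_le_iff.mp this)
      have hmem : (R (η₁ + η₂)).toReal - ξ (η₁ + η₂) + M * ‖x + y - i (η₁ + η₂)‖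
          ∈ Sset (x + y) := ⟨η₁ + η₂, hfin, rfl⟩
      have hle := csInf_le (hbdd' _) hmem
      have ht1 : (R (η₁ + η₂)).toReal ≤ (R η₁).toReal + (R η₂).toReal := by
        rw [← ENNReal.toReal_add hη₁ hη₂]
        exact ENNReal.toReal_mono (ENNReal.add_ne_top.2 ⟨hη₁, hη₂⟩) (hRadd η₁ η₂)
      have ht2 : ‖x + y - i (η₁ + η₂)‖ ≤ ‖x - i η₁‖ + ‖y - i η₂‖ := by
        have : x + y - i (η₁ + η₂) = (x - i η₁) + (y - i η₂) := by
          rw [map_add]; abel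
        rw [this]; exact norm_add_le _ _
      have ht3 : M * ‖x + y - i (η₁ + η₂)‖ ≤ M * (‖x - i η₁‖ + ‖y - i η₂‖) :=
        mul_le_mul_of_nonneg_left ht2 hM
      have hξ : ξ (η₁ + η₂) = ξ η₁ + ξ η₂ := map_add _ _ _
      calc p (x + y) ≤ _ := hle
        _ ≤ _ := by rw [hξ]; nlinarith
    have h2 : ∀ a ∈ Sset x, p (x + y) - a ≤ p y :=
      fun a ha => le_csInf (hne y) fun b hb => by linarith [h1 a ha b hb]
    have h3 : p (x + y) - p y ≤ p x :=
      le_csInf (hne x) fun a ha => by linarith [h2 a ha]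
    linarith
  have hp0 : 0 ≤ p 0 := by
    refine le_csInf (hne 0) ?_
    rintro y ⟨η, hη, rfl⟩
    have := hkey η hη
    have h0 : ‖(0:H) - i η‖ = ‖i η‖ := by rw [zero_sub, norm_neg]
    rw [h0]; linarith
  -- Hahn-Banach
  obtain ⟨g, -, hg⟩ := exists_extension_of_le_sublinear ((0 : H →ₗ[ℝ] ℝ).toPMap ⊥) p
    phom padd (fun x => by
      have hx0 : (x : H) = 0 := by
        have h := x.2
        simp only [LinearMap.toPMap_domain, Submodule.mem_bot] at h
        exact h
      show (0:ℝ) ≤ p (x : H)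
      rw [hx0]; exact hp0)
  have hgb : ∀ x : H, ‖g x‖ ≤ M * ‖x‖ := by
    intro x
    rw [Real.norm_eq_abs, abs_le]
    constructor
    · have h1 : g (-x) ≤ p (-x) := hg (-x)
      have h2 : p (-x) ≤ M * ‖x‖ := by simpa using hple (-x)
      have h3 : g (-x) = -g x := map_neg g x
      linarith
    · linarith [hg x, hple x]
  set G : H →L[ℝ] ℝ := g.mkContinuous M hgb with hG
  have hGnorm : ‖G‖ ≤ M := LinearMap.mkContinuous_norm_le g hM hgb
  refine ⟨(InnerProductSpace.toDual ℝ H).symm (-G), ?_, ?_⟩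
  · rw [LinearIsometryEquiv.norm_map, norm_neg]; exact hGnorm
  · intro η hη
    have hinner : (inner ℝ ((InnerProductSpace.toDual ℝ H).symm (-G)) (i η) : ℝ) = -(g (i η)) := by
      rw [InnerProductSpace.toDual_symm_apply]
      simp only [ContinuousLinearMap.neg_apply]
      rfl
    have h1 : g (i η) ≤ p (i η) := hg _
    have h2 : p (i η) ≤ (R η).toReal - ξ η := by
      have hmem : (R η).toReal - ξ η + M * ‖i η - i η‖ ∈ Sset (i η) := ⟨η, hη, rfl⟩
      have := csInf_le (hbdd' _) hmem
      simpa using this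
    rw [hinner]
    linarith


/-- Duality formula in a Hilbert triple `(X, H, X*)` (with `i : X → H` a dense continuous
embedding and `H` embedded into `X*` via `h ↦ ⟨h, i ·⟩`): for a convex, positively
1-homogeneous `R : X → [0,+∞]` with `R(0)=0`, and every `ξ ∈ X*`,
`inf_{w ∈ ∂R(0)} 𝔣_H(ξ - w) = sup { ⟨ξ,η⟩ - R(η) : η ∈ X, ‖i η‖_H ≤ 1 }`,
where `𝔣_H(ξ') = ‖h‖_H` if `ξ' = ⟨h, i ·⟩` for some `h ∈ H` and `+∞` otherwise
(expressed below as an infimum over all such representatives `h`). -/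
theorem stmt1 {X H : Type*}
    [NormedAddCommGroup X] [InnerProductSpace ℝ X] [CompleteSpace X]
    [NormedAddCommGroup H] [InnerProductSpace ℝ H] [CompleteSpace H]
    (i : X →L[ℝ] H) (hdense : DenseRange i)
    (R : X → ℝ≥0∞) (hR0 : R 0 = 0)
    (hconv : ∀ v w : X, ∀ t : ℝ, 0 ≤ t → t ≤ 1 →
      R (t • v + (1 - t) • w) ≤ ENNReal.ofReal t * R v + ENNReal.ofReal (1 - t) * R w)
    (hhom : ∀ c : ℝ, 0 < c → ∀ v : X, R (c • v) = ENNReal.ofReal c * R v)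
    (ξ : X →L[ℝ] ℝ) :
    (((⨅ w ∈ {w : X →L[ℝ] ℝ | ∀ η : X, ((w η : ℝ) : EReal) ≤ (R η : EReal)},
        ⨅ h ∈ {h : H | ∀ η : X, (ξ - w) η = (inner ℝ h (i η) : ℝ)},
          (‖h‖₊ : ℝ≥0∞)) : ℝ≥0∞) : EReal)
      = ⨆ η ∈ {η : X | ‖i η‖ ≤ 1}, (((ξ η : ℝ) : EReal) - (R η : EReal)) := by
  classical
  set Sup : EReal := ⨆ η ∈ {η : X | ‖i η‖ ≤ 1}, (((ξ η : ℝ) : EReal) - (R η : EReal)) with hSup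
  set I : ℝ≥0∞ := ⨅ w ∈ {w : X →L[ℝ] ℝ | ∀ η : X, ((w η : ℝ) : EReal) ≤ (R η : EReal)},
        ⨅ h ∈ {h : H | ∀ η : X, (ξ - w) η = (inner ℝ h (i η) : ℝ)}, (‖h‖₊ : ℝ≥0∞) with hI
  have hS0 : (0 : EReal) ≤ Sup := by
    have hmem : (0 : X) ∈ {η : X | ‖i η‖ ≤ 1} := by simp
    have := le_iSup₂ (f := fun (η : X) (_ : η ∈ {η : X | ‖i η‖ ≤ 1}) =>
      (((ξ η : ℝ) : EReal) - (R η : EReal))) 0 hmem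
    rw [hSup]; simpa [hR0] using this
  -- Easy direction: Sup ≤ I
  have hbge : Sup ≤ (I : EReal) := by
    refine iSup₂_le fun η hη => ?_
    by_cases hT : R η = ⊤
    · rw [hT, EReal.coe_ennreal_top, EReal.sub_top]
      exact bot_le
    · have hRcoe : (R η : EReal) = (((R η).toReal : ℝ) : EReal) := ennreal_ereal_coe_toReal hT
      rw [hRcoe, ← EReal.coe_sub]
      set r : ℝ := ξ η - (R η).toReal with hr
      rcases le_or_gt r 0 with hr0 | hr0
      · exact le_trans (EReal.coe_nonpos.2 hr0) (EReal.coe_ennreal_nonneg _)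
      · have key2 : ENNReal.ofReal r ≤ I := by
          refine le_iInf fun w => le_iInf fun hw => le_iInf fun h => le_iInf fun hh => ?_
          rw [← ENNReal.ofReal_coe_nnreal, coe_nnnorm]
          apply ENNReal.ofReal_le_ofReal
          have hw1 : w η ≤ (R η).toReal := by
            have := hw η
            rw [hRcoe, EReal.coe_le_coe_iff] at this
            exact this
          have hh1 : ξ η - w η = (inner ℝ h (i η) : ℝ) := by
            have := hh η
            rwa [ContinuousLinearMap.sub_apply] at this
          have hin : (inner ℝ h (i η) : ℝ) ≤ ‖h‖ * ‖i η‖ := real_inner_le_norm h (i η)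
          have hin2 : ‖h‖ * ‖i η‖ ≤ ‖h‖ := by
            have := mul_le_mul_of_nonneg_left hη (norm_nonneg h)
            simpa using this
          rw [hr]
          linarith
        calc (r : EReal) = ((ENNReal.ofReal r : ℝ≥0∞) : EReal) := by
              rw [EReal.coe_ennreal_ofReal, max_eq_left hr0.le]
          _ ≤ (I : EReal) := EReal.coe_ennreal_le_coe_ennreal_iff.2 key2
  -- Hard direction: I ≤ Sup
  have hale : (I : EReal) ≤ Sup := by
    by_cases hTop : Sup = ⊤
    · rw [hTop]; exact le_top
    have hbot : Sup ≠ ⊥ := fun h => by simp [h] at hS0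
    set M : ℝ := Sup.toReal with hM
    have hSM : ((M : ℝ) : EReal) = Sup := EReal.coe_toReal hTop hbot
    have hM0 : 0 ≤ M := by
      rw [← EReal.coe_nonneg, hSM]; exact hS0
    have hstep : ∀ η : X, R η ≠ ⊤ → ∀ t : ℝ, 0 < t → t * ‖i η‖ ≤ 1 →
        t * (ξ η - (R η).toReal) ≤ M := by
      intro η hT t ht htle
      have hmem : t • η ∈ {η : X | ‖i η‖ ≤ 1} := by
        simp only [Set.mem_setOf_eq, map_smul, norm_smul, Real.norm_eq_abs, abs_of_pos ht]
        exact htle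
      have hb := le_iSup₂ (f := fun (η : X) (_ : η ∈ {η : X | ‖i η‖ ≤ 1}) =>
        (((ξ η : ℝ) : EReal) - (R η : EReal))) (t • η) hmem
      have hRt : R (t • η) = ENNReal.ofReal t * R η := hhom t ht η
      have hRtT : R (t • η) ≠ ⊤ := by
        rw [hRt]; exact ENNReal.mul_ne_top ENNReal.ofReal_ne_top hT
      have hRtcoe : (R (t • η) : EReal) = ((t * (R η).toReal : ℝ) : EReal) := by
        rw [ennreal_ereal_coe_toReal hRtT, hRt, ENNReal.toReal_mul, ENNReal.toReal_ofReal ht.le]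
      have hξt : ξ (t • η) = t * ξ η := by rw [map_smul, smul_eq_mul]
      rw [hRtcoe, hξt, ← EReal.coe_sub, ← hSup, ← hSM, EReal.coe_le_coe_iff] at hb
      calc t * (ξ η - (R η).toReal) = t * ξ η - t * (R η).toReal := by ring
        _ ≤ M := hb
    have hkey : ∀ η : X, R η ≠ ⊤ → ξ η - (R η).toReal ≤ M * ‖i η‖ := by
      intro η hT
      set a : ℝ := ξ η - (R η).toReal with ha
      rcases (norm_nonneg (i η)).eq_or_lt with h0 | h0
      · have hz : ‖i η‖ = 0 := h0.symm
        rw [hz, mul_zero]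
        by_contra hcon
        push_neg at hcon
        have ht : (0 : ℝ) < (M + 1) / a := by positivity
        have := hstep η hT ((M + 1) / a) ht (by rw [hz, mul_zero]; norm_num)
        rw [← ha, div_mul_cancel₀ _ hcon.ne'] at this
        linarith
      · have := hstep η hT ‖i η‖⁻¹ (by positivity) (by rw [inv_mul_cancel₀ h0.ne'])
        rw [← ha] at this
        have h2 := mul_le_mul_of_nonneg_left this (le_of_lt h0)
        rw [← mul_assoc, mul_inv_cancel₀ h0.ne', one_mul] at h2
        linarith [h2]
    obtain ⟨h, hhnorm, hhle⟩ := hb_aux i R hR0 hconv hhom ξ M hM0 hkey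
    set w : X →L[ℝ] ℝ := ξ - (innerSL ℝ h).comp i with hw
    have hwapp : ∀ η : X, w η = ξ η - (inner ℝ h (i η) : ℝ) := by
      intro η
      simp [hw, innerSL_apply_apply]
    have hwmem : w ∈ {w : X →L[ℝ] ℝ | ∀ η : X, ((w η : ℝ) : EReal) ≤ (R η : EReal)} := by
      intro η
      by_cases hT : R η = ⊤
      · rw [hT, EReal.coe_ennreal_top]; exact le_top
      · have hRcoe : (R η : EReal) = (((R η).toReal : ℝ) : EReal) := ennreal_ereal_coe_toReal hT
        rw [hRcoe, EReal.coe_le_coe_iff, hwapp]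
        exact hhle η hT
    have hhmem : h ∈ {h' : H | ∀ η : X, (ξ - w) η = (inner ℝ h' (i η) : ℝ)} := by
      intro η
      rw [ContinuousLinearMap.sub_apply, hwapp]
      ring
    have hI1 : I ≤ (‖h‖₊ : ℝ≥0∞) := by
      calc I ≤ ⨅ h' ∈ {h' : H | ∀ η : X, (ξ - w) η = (inner ℝ h' (i η) : ℝ)},
            (‖h'‖₊ : ℝ≥0∞) := iInf₂_le w hwmem
        _ ≤ _ := iInf₂_le h hhmem
    have hI2 : I ≤ ENNReal.ofReal M := by
      refine le_trans hI1 ?_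
      rw [← ENNReal.ofReal_coe_nnreal, coe_nnnorm]
      exact ENNReal.ofReal_le_ofReal hhnorm
    calc (I : EReal) ≤ ((ENNReal.ofReal M : ℝ≥0∞) : EReal) :=
          EReal.coe_ennreal_le_coe_ennreal_iff.2 hI2
      _ = ((M : ℝ) : EReal) := by rw [EReal.coe_ennreal_ofReal, max_eq_left hM0]
      _ = Sup := hSM
  exact le_antisymm hale hbge
end
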